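/- Let M be a d×n integer matrix of rank r all of whose r×r minors lie in {-1,0,1} (a unimodular matrix), and let L = M·Mᵀ. Then the subgroup of ℤ^d generated by the columns of L equals the subgroup of ℤ^d generated by the vectors M·c, where c ranges over the elementary vectors of the real row space of M (equivalently, over the cocircuits of the regular oriented matroid represented by M; the vectors M·c are twice the barycenters of the facets of the centrally symmetric zonotope Z₀(M)). -/

import Mathlib

/-- A vector `v` is an elementary vector of a subspace `W ⊆ ℝⁿ` if it is a
nonzero vector of `W` with all coordinates in `{-1,0,1}` whose support is
minimal (w.r.t. inclusion) among supports of nonzero vectors of `W`. -/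
def IsElementaryVec {n : ℕ} (W : Submodule ℝ (Fin n → ℝ)) (v : Fin n → ℝ) : Prop :=
  v ∈ W ∧ v ≠ 0 ∧ (∀ i, v i ∈ ({-1, 0, 1} : Set ℝ)) ∧
    ∀ w ∈ W, w ≠ 0 → {i | w i ≠ 0} ⊆ {i | v i ≠ 0} → {i | w i ≠ 0} = {i | v i ≠ 0}

open Matrix

namespace Stmt8Aux

variable {d n r : ℕ}

/-- Choose `r` column indices `g` whose columns enumerate a linearly independent set `b`,
with the first `s1` of them lying in `T`. -/
lemma exists_g {s1 s2 : ℕ} (hss : s1 + s2 = r) (col : Fin n → (Fin r → ℝ))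
    (T : Set (Fin n)) (c b : Set (Fin r → ℝ))
    (hcb : c ⊆ b) (hcT : c ⊆ col '' T) (hbr : b ⊆ Set.range col)
    (hli : LinearIndependent ℝ ((↑) : b → (Fin r → ℝ)))
    (hbfin : b.Finite) (hcfin : c.Finite)
    (hbcard : b.ncard = r) (hccard : c.ncard = s1) :
    ∃ g : Fin r → Fin n, LinearIndependent ℝ (fun l => col (g l)) ∧
      ∀ l : Fin r, (l : ℕ) < s1 → g l ∈ T := by
  haveI := hbfin.fintype
  haveI := hcfin.fintype
  haveI : Fintype ↥(b \ c) := hbfin.diff.fintype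
  have hc1 : Fintype.card ↥c = s1 := by
    rw [← Nat.card_eq_fintype_card, Nat.card_coe_set_eq, hccard]
  have hd1 : Fintype.card ↥(b \ c) = s2 := by
    rw [← Nat.card_eq_fintype_card, Nat.card_coe_set_eq, Set.ncard_diff hcb hcfin,
      hbcard, hccard]
    omega
  let e1 : Fin s1 ≃ ↥c := (Fintype.equivFinOfCardEq hc1).symm
  let e2 : Fin s2 ≃ ↥(b \ c) := (Fintype.equivFinOfCardEq hd1).symm
  let E : Fin r ≃ ↥c ⊕ ↥(b \ c) :=
    (finCongr hss.symm).trans (finSumFinEquiv.symm.trans (Equiv.sumCongr e1 e2))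
  let J : ↥c ⊕ ↥(b \ c) → ↥b :=
    Sum.elim (fun x : ↥c => (⟨x.1, hcb x.2⟩ : ↥b)) (fun y : ↥(b \ c) => ⟨y.1, y.2.1⟩)
  have Jinj : Function.Injective J := by
    intro u1 u2 h
    rcases u1 with x1 | y1 <;> rcases u2 with x2 | y2 <;>
      simp only [J, Sum.elim_inl, Sum.elim_inr, Subtype.mk.injEq] at h
    · exact congrArg Sum.inl (Subtype.ext h)
    · exact absurd (h ▸ x1.2) y2.2.2
    · exact absurd (h.symm ▸ x2.2) y1.2.2
    · exact congrArg Sum.inr (Subtype.ext h)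
  have hgc : ∀ x : ↥c, ∃ j, j ∈ T ∧ col j = x.1 := by
    intro x
    obtain ⟨j, hj, hcj⟩ := hcT x.2
    exact ⟨j, hj, hcj⟩
  choose gc hgcT hgccol using hgc
  have hgd : ∀ y : ↥(b \ c), ∃ j, col j = y.1 := fun y => hbr y.2.1
  choose gd hgdcol using hgd
  refine ⟨(Sum.elim gc gd) ∘ E, ?_, ?_⟩
  · have hcols : (fun l => col ((Sum.elim gc gd ∘ E) l))
        = (fun x : ↥b => (x : Fin r → ℝ)) ∘ (J ∘ E) := by
      funext l
      simp only [Function.comp_apply]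
      rcases hE : E l with x | y <;>
        simp only [hE, Sum.elim_inl, Sum.elim_inr, J, hgccol, hgdcol]
    rw [hcols]
    exact hli.comp (J ∘ E) (Jinj.comp E.injective)
  · intro l hl
    have hEl : E l = Sum.inl (e1 ⟨(l : ℕ), hl⟩) := by
      simp only [E, Equiv.trans_apply]
      have h2 : finSumFinEquiv.symm (finCongr hss.symm l) = Sum.inl ⟨(l : ℕ), hl⟩ := by
        rw [Equiv.symm_apply_eq]
        ext
        simp [Fin.castAdd]
      rw [h2]
      rfl
    simp only [Function.comp_apply, hEl, Sum.elim_inl]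
    exact hgcT _


lemma exists_basis_rows {M : Matrix (Fin d) (Fin n) ℝ} (hrank : M.rank = r) :
    ∃ f : Fin r → Fin d, Function.Injective f ∧
      LinearIndependent ℝ (fun k => M (f k)) ∧
      Submodule.span ℝ (Set.range fun k => M (f k))
        = Submodule.span ℝ (Set.range fun i => M i) := by
  have hfr : Module.finrank ℝ (Submodule.span ℝ (Set.range fun i => M i)) = r := by
    exact (Matrix.rank_eq_finrank_span_row M).symm.trans hrank
  obtain ⟨b, hbsub, hbspan, hbli⟩ := exists_linearIndependent ℝ (Set.range fun i => M i)
  have hbfin : b.Finite := (Set.finite_range _).subset hbsub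
  haveI := hbfin.fintype
  have hcard : Fintype.card ↥b = r := by
    rw [← Set.toFinset_card, ← finrank_span_set_eq_card hbli, hbspan, hfr]
  let e : Fin r ≃ ↥b := (Fintype.equivFinOfCardEq hcard).symm
  have hpre : ∀ x : ↥b, ∃ i, M i = (x : Fin n → ℝ) := fun x => hbsub x.2
  choose idx hidx using hpre
  refine ⟨fun k => idx (e k), ?_, ?_, ?_⟩
  · intro k1 k2 h
    apply e.injective
    apply Subtype.ext
    simp only at h
    rw [← hidx (e k1), ← hidx (e k2), h]
  · have h1 : (fun k => M (idx (e k))) = (fun x : ↥b => (x : Fin n → ℝ)) ∘ e :=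
      funext fun k => hidx (e k)
    rw [h1]
    exact hbli.comp e e.injective
  · have h1 : (Set.range fun k => M (idx (e k))) = b := by
      have h2 : (fun k => M (idx (e k))) = (fun x : ↥b => (x : Fin n → ℝ)) ∘ e :=
        funext fun k => hidx (e k)
      rw [h2, Set.range_comp, Equiv.range_eq_univ, Set.image_univ, Subtype.range_coe]
    rw [h1, hbspan]

lemma engine {M : Matrix (Fin d) (Fin n) ℝ} (f : Fin r → Fin d) (g : Fin r → Fin n)
    (lam : Fin r → ℝ) {w : Fin n → ℝ} (hw : w = ∑ k, lam k • M (f k)) :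
    (M.submatrix f g).det • lam = (M.submatrix f g)ᵀ.adjugate *ᵥ (w ∘ g) := by
  have h1 : (M.submatrix f g)ᵀ *ᵥ lam = w ∘ g := by
    funext l
    simp [Matrix.mulVec, dotProduct, hw, Finset.sum_apply, mul_comm]
  rw [← h1, Matrix.mulVec_mulVec, Matrix.adjugate_mul, Matrix.det_transpose,
    Matrix.smul_mulVec, Matrix.one_mulVec]

/-- the span of the columns of the submatrix on linearly independent rows has dim `r`. -/
lemma span_cols_finrank {M : Matrix (Fin d) (Fin n) ℝ} (f : Fin r → Fin d)
    (hfli : LinearIndependent ℝ (fun k => M (f k))) :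
    Module.finrank ℝ (Submodule.span ℝ
      (Set.range fun j => fun k => M (f k) j)) = r := by
  have h1 : (M.submatrix f id).rank = r := by
    have h2 : LinearIndependent ℝ (fun k => (M.submatrix f id) k) := hfli
    simpa [Matrix.submatrix] using h2.rank_matrix
  have h3 : (Set.range (M.submatrix f id)ᵀ) = (Set.range fun j => fun k => M (f k) j) := rfl
  rw [← h3]
  exact (Matrix.rank_eq_finrank_span_cols _).symm.trans h1


lemma mem_closure_rows {M : Matrix (Fin d) (Fin n) ℝ}
    (hint : ∀ i j, ∃ z : ℤ, M i j = (z : ℝ))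
    (hrank : M.rank = r)
    (huni : ∀ (f : Fin r → Fin d) (g : Fin r → Fin n),
      Function.Injective f → Function.Injective g →
      (M.submatrix f g).det ∈ ({-1, 0, 1} : Set ℝ))
    {v : Fin n → ℝ} (hv : v ∈ Submodule.span ℝ (Set.range fun i => M i))
    (hvint : ∀ j, ∃ z : ℤ, v j = (z : ℝ)) :
    v ∈ AddSubgroup.closure (Set.range fun i => M i) := by
  obtain ⟨f, hfinj, hfli, hfspan⟩ := exists_basis_rows hrank
  set col : Fin n → (Fin r → ℝ) := fun j => fun k => M (f k) j with hcoldef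
  -- a linearly independent spanning set of columns
  obtain ⟨b, hbsub, hbspan, hbli⟩ := exists_linearIndependent ℝ (Set.range col)
  have hbfin : b.Finite := (Set.finite_range _).subset hbsub
  haveI := hbfin.fintype
  have hbcard : b.ncard = r := by
    rw [Set.ncard_eq_toFinset_card', ← finrank_span_set_eq_card hbli, hbspan]
    exact span_cols_finrank f hfli
  obtain ⟨g, hgli, -⟩ := exists_g (Nat.zero_add r) col ∅ ∅ b (Set.empty_subset b)
    (by simp) hbsub hbli hbfin Set.finite_empty hbcard (Set.ncard_empty _)
  have hginj : Function.Injective g := by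
    intro a a' h
    exact hgli.injective (by rw [h])
  -- the submatrix is invertible with determinant ±1
  have hunit : IsUnit (M.submatrix f g).det := by
    rw [← Matrix.isUnit_iff_isUnit_det]
    rw [← Matrix.linearIndependent_cols_iff_isUnit]
    exact hgli
  have hdetne : (M.submatrix f g).det ≠ 0 := hunit.ne_zero
  have hdet : (M.submatrix f g).det = 1 ∨ (M.submatrix f g).det = -1 := by
    rcases huni f g hfinj hginj with h | h | h
    · exact Or.inr h
    · exact absurd h hdetne
    · exact Or.inl h
  -- coordinates of v
  have hv' : v ∈ Submodule.span ℝ (Set.range fun k => M (f k)) := hfspan ▸ hv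
  obtain ⟨lam, hlam⟩ := (Submodule.mem_span_range_iff_exists_fun ℝ).1 hv'
  have heng := engine f g lam hlam.symm
  -- integrality of lam
  choose Mz hMz using hint
  choose vz hvz using hvint
  have hA : M.submatrix f g = (Matrix.of fun k l => Mz (f k) (g l)).map (Int.cast : ℤ → ℝ) := by
    ext k l
    simp [hMz]
  have hlamint : ∀ k, ∃ z : ℤ, lam k = (z : ℝ) := by
    intro k
    set A0 : Matrix (Fin r) (Fin r) ℤ := Matrix.of fun k l => Mz (f k) (g l) with hA0
    have hadj : (M.submatrix f g)ᵀ.adjugate = (A0ᵀ.adjugate).map (Int.cast : ℤ → ℝ) := by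
      rw [hA, ← Matrix.transpose_map]
      exact ((Int.castRingHom ℝ).map_adjugate A0ᵀ).symm
    have h2 : (M.submatrix f g).det * lam k
        = ((∑ l, A0ᵀ.adjugate k l * vz (g l) : ℤ) : ℝ) := by
      have h3 := congrFun heng k
      simp only [Pi.smul_apply, smul_eq_mul] at h3
      rw [h3, hadj]
      simp only [Matrix.mulVec, dotProduct, Matrix.map_apply, Function.comp_apply]
      push_cast
      congr 1
      funext l
      rw [hvz]
    rcases hdet with h | h
    · exact ⟨_, by rw [← h2, h, one_mul]⟩
    · refine ⟨-(∑ l, A0ᵀ.adjugate k l * vz (g l)), ?_⟩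
      rw [Int.cast_neg, ← h2, h]
      ring
  -- conclude
  choose lz hlz using hlamint
  rw [← hlam]
  refine AddSubgroup.sum_mem _ fun k _ => ?_
  rw [hlz k, Int.cast_smul_eq_zsmul]
  exact AddSubgroup.zsmul_mem _
    (AddSubgroup.subset_closure (Set.mem_range_self (f := fun i => M i) (f k))) _


lemma exists_elem {M : Matrix (Fin d) (Fin n) ℝ}
    (hrank : M.rank = r)
    (huni : ∀ (f : Fin r → Fin d) (g : Fin r → Fin n),
      Function.Injective f → Function.Injective g →
      (M.submatrix f g).det ∈ ({-1, 0, 1} : Set ℝ))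
    {v : Fin n → ℝ} (hv : v ∈ Submodule.span ℝ (Set.range fun i => M i)) (hv0 : v ≠ 0) :
    ∃ e, IsElementaryVec (Submodule.span ℝ (Set.range fun i => M i)) e ∧
      {i | e i ≠ 0} ⊆ {i | v i ≠ 0} := by
  set W := Submodule.span ℝ (Set.range fun i => M i) with hWdef
  -- pick w of minimal support among nonzero elements of W with support inside supp v
  set K : Set ℕ := (fun w : Fin n → ℝ => {i | w i ≠ 0}.ncard) ''
    {w | w ∈ W ∧ w ≠ 0 ∧ {i | w i ≠ 0} ⊆ {i | v i ≠ 0}} with hKdef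
  have hKne : K.Nonempty := ⟨_, ⟨v, ⟨hv, hv0, subset_rfl⟩, rfl⟩⟩
  obtain ⟨w, ⟨hwW, hw0, hwv⟩, hwcard⟩ := Nat.sInf_mem hKne
  simp only at hwcard
  have hmin : ∀ x, x ∈ W → x ≠ 0 → {i | x i ≠ 0} ⊆ {i | w i ≠ 0} →
      {i | x i ≠ 0} = {i | w i ≠ 0} := by
    intro x hxW hx0 hxw
    refine Set.eq_of_subset_of_ncard_le hxw ?_ (Set.toFinite _)
    rw [hwcard]
    exact Nat.sInf_le ⟨x, ⟨hxW, hx0, hxw.trans hwv⟩, rfl⟩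
  -- the support-constrained subspace is one-dimensional
  have hdim : ∀ x, x ∈ W → {i | x i ≠ 0} ⊆ {i | w i ≠ 0} → ∃ cc : ℝ, x = cc • w := by
    intro x hxW hxw
    obtain ⟨i0, hi0⟩ : ∃ i, w i ≠ 0 := by
      by_contra h
      push_neg at h
      exact hw0 (funext fun i => by simpa using h i)
    by_cases hx0 : x = 0
    · exact ⟨0, by simp [hx0]⟩
    set y := w i0 • x - x i0 • w with hy
    have hyW : y ∈ W := sub_mem (Submodule.smul_mem _ _ hxW) (Submodule.smul_mem _ _ hwW)
    have hysupp : {i | y i ≠ 0} ⊆ {i | w i ≠ 0} := by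
      intro i hi
      simp only [Set.mem_setOf_eq, hy, Pi.sub_apply, Pi.smul_apply, smul_eq_mul] at hi ⊢
      intro hwi
      apply hi
      have hxi : x i = 0 := by
        by_contra hxi
        exact (hxw hxi) hwi
      rw [hxi, hwi]
      ring
    have hyi0 : y i0 = 0 := by
      simp only [hy, Pi.sub_apply, Pi.smul_apply, smul_eq_mul]
      ring
    have hy0 : y = 0 := by
      by_contra h
      have heq := hmin y hyW h hysupp
      have : i0 ∈ {i | y i ≠ 0} := heq ▸ hi0
      exact this hyi0
    refine ⟨x i0 / w i0, ?_⟩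
    have hsw : w i0 • x = x i0 • w := by rwa [sub_eq_zero] at hy0
    funext i
    have := congrFun hsw i
    simp only [Pi.smul_apply, smul_eq_mul] at this ⊢
    field_simp
    linarith [this]
  -- r is positive
  have hfr : Module.finrank ℝ W = r := by
    rw [hWdef]; exact (Matrix.rank_eq_finrank_span_row M).symm.trans hrank
  have hr0 : 0 < r := by
    rcases Nat.eq_zero_or_pos r with h | h
    · exfalso
      have : W = ⊥ := Submodule.finrank_eq_zero.mp (by rw [hfr, h])
      rw [this] at hv
      exact hv0 (Submodule.mem_bot ℝ |>.mp hv)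
    · exact h
  -- basis rows and coordinates of w
  obtain ⟨f, hfinj, hfli, hfspan⟩ := exists_basis_rows hrank
  have hwW' : w ∈ Submodule.span ℝ (Set.range fun k => M (f k)) := by
    rw [hfspan]; exact hwW
  obtain ⟨lam, hlam⟩ := (Submodule.mem_span_range_iff_exists_fun ℝ).1 hwW'
  have hlamne : lam ≠ 0 := by
    intro h
    apply hw0
    rw [← hlam, h]
    simp
  set col : Fin n → (Fin r → ℝ) := fun j => fun k => M (f k) j with hcoldef
  set T : Set (Fin n) := {j | w j = 0} with hTdef
  -- the columns indexed by T span an (r-1)-dimensional space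
  set P : Matrix (Fin r) ↥T ℝ := Matrix.of fun k (j : ↥T) => M (f k) j.1 with hPdef
  have hker : LinearMap.ker Pᵀ.mulVecLin = Submodule.span ℝ {lam} := by
    apply le_antisymm
    · intro x hx
      rw [LinearMap.mem_ker] at hx
      set y := ∑ k, x k • M (f k) with hydef
      have hyW : y ∈ W := by
        rw [hWdef]
        exact Submodule.sum_mem _ fun k _ =>
          Submodule.smul_mem _ _ (Submodule.subset_span ⟨f k, rfl⟩)
      have hysupp : {i | y i ≠ 0} ⊆ {i | w i ≠ 0} := by
        intro j hj
        simp only [Set.mem_setOf_eq] at hj ⊢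
        intro hwj
        apply hj
        have h5 := congrFun hx (⟨j, hwj⟩ : ↥T)
        simp only [Matrix.mulVecLin_apply, Matrix.mulVec, dotProduct,
          Matrix.transpose_apply, Pi.zero_apply] at h5
        rw [hydef]
        simp only [Finset.sum_apply, Pi.smul_apply, smul_eq_mul]
        rw [← h5]
        congr 1
        funext k
        rw [hPdef]
        simp [mul_comm]
      obtain ⟨cc, hcc⟩ := hdim y hyW hysupp
      have hxk : ∀ k, x k = cc * lam k := by
        have h0 : ∑ k, (x k - cc * lam k) • M (f k) = 0 := by
          have : ∑ k, (x k - cc * lam k) • M (f k)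
              = (∑ k, x k • M (f k)) - cc • ∑ k, lam k • M (f k) := by
            rw [Finset.smul_sum, ← Finset.sum_sub_distrib]
            congr 1
            funext k
            rw [sub_smul, smul_smul]
          rw [this, hlam, ← hydef, hcc]
          simp
        intro k
        have := Fintype.linearIndependent_iff.mp hfli _ h0 k
        linarith [this]
      apply Submodule.mem_span_singleton.mpr
      exact ⟨cc, funext fun k => (hxk k).symm⟩
    · rw [Submodule.span_le, Set.singleton_subset_iff]
      rw [SetLike.mem_coe, LinearMap.mem_ker]
      funext j
      simp only [Matrix.mulVecLin_apply, Matrix.mulVec, dotProduct,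
        Matrix.transpose_apply, Pi.zero_apply]
      have h6 : w j.1 = 0 := j.2
      rw [← hlam] at h6
      simp only [Finset.sum_apply, Pi.smul_apply, smul_eq_mul] at h6
      rw [← h6]
      congr 1
      funext k
      rw [hPdef]
      simp [mul_comm]
  have hrankPT : Pᵀ.rank + 1 = r := by
    have h7 := LinearMap.finrank_range_add_finrank_ker Pᵀ.mulVecLin
    rw [hker, finrank_span_singleton hlamne] at h7
    simpa [Matrix.rank] using h7
  have hcolsT : Module.finrank ℝ (Submodule.span ℝ (col '' T)) + 1 = r := by
    have h8 : Set.range Pᵀ = col '' T := by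
      ext x
      constructor
      · rintro ⟨j, rfl⟩
        exact ⟨j.1, j.2, rfl⟩
      · rintro ⟨j, hj, rfl⟩
        exact ⟨⟨j, hj⟩, rfl⟩
    rw [← h8, show Set.range Pᵀ = Set.range P.col from rfl, ← Matrix.rank_eq_finrank_span_cols, ← Matrix.rank_transpose]
    exact hrankPT
  -- independent columns within T, extended to a basis of the column space
  obtain ⟨c, hcsub, hcspan, hcli⟩ := exists_linearIndependent ℝ (col '' T)
  have hcfin : c.Finite := ((Set.toFinite T).image col).subset hcsub
  haveI := hcfin.fintype
  have hccard : c.ncard = r - 1 := by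
    rw [Set.ncard_eq_toFinset_card', ← finrank_span_set_eq_card hcli, hcspan]
    omega
  obtain ⟨b, hbsub, hcb, hbspan, hbli⟩ := exists_linearIndepOn_id_extension hcli
      (hcsub.trans (Set.image_subset_range col T))
  have hbfin : b.Finite := (Set.finite_range col).subset hbsub
  haveI := hbfin.fintype
  have hbspan' : Submodule.span ℝ b = Submodule.span ℝ (Set.range col) :=
    le_antisymm (Submodule.span_mono hbsub) (Submodule.span_le.mpr hbspan)
  have hbcard : b.ncard = r := by
    rw [Set.ncard_eq_toFinset_card', ← finrank_span_set_eq_card hbli, hbspan']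
    exact span_cols_finrank f hfli
  obtain ⟨g, hgli, hgT⟩ := exists_g (show (r-1) + 1 = r by omega) col T c b hcb hcsub
    hbsub hbli hbfin hcfin hbcard hccard
  have hginj : Function.Injective g := fun a a' h => hgli.injective (by rw [h])
  set A := M.submatrix f g with hAdef
  have hunit : IsUnit A.det := by
    rw [← Matrix.isUnit_iff_isUnit_det, ← Matrix.linearIndependent_cols_iff_isUnit]
    exact hgli
  have hdetne : A.det ≠ 0 := hunit.ne_zero
  have hdet : A.det = 1 ∨ A.det = -1 := by
    rcases huni f g hfinj hginj with h | h | h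
    · exact Or.inr h
    · exact absurd h hdetne
    · exact Or.inl h
  set lst : Fin r := ⟨r - 1, by omega⟩ with hlst
  have hwg : w ∘ g = Pi.single lst (w (g lst)) := by
    funext l
    by_cases hl : l = lst
    · rw [hl]; simp
    · have hlt : (l : ℕ) < r - 1 := by
        have h1 := l.2
        have h2 : (l : ℕ) ≠ r - 1 := fun hc => hl (Fin.ext hc)
        omega
      have hT : w (g l) = 0 := hgT l hlt
      simp [Pi.single_eq_of_ne hl, hT]
  have heng := engine f g lam hlam.symm
  have hwglst : w (g lst) ≠ 0 := by
    intro h0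
    apply hlamne
    have hz : w ∘ g = 0 := by
      rw [hwg, h0]; simp
    rw [hz, Matrix.mulVec_zero] at heng
    rcases smul_eq_zero.mp heng with h | h
    · exact absurd h hdetne
    · exact h
  -- the key determinant identity
  have hkey : ∀ j, A.det * w j
      = w (g lst) * (A.updateCol lst fun k => M (f k) j).det := by
    intro j
    have h1 : w j = ∑ k, lam k * M (f k) j := by
      rw [← hlam]; simp [Finset.sum_apply]
    have h3 : ∀ k, A.det * lam k = Aᵀ.adjugate k lst * w (g lst) := by
      intro k
      have h4 := congrFun heng k
      simp only [Pi.smul_apply, smul_eq_mul] at h4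
      rw [h4, hwg, Matrix.mulVec_single]; rfl
    calc A.det * w j = ∑ k, (A.det * lam k) * M (f k) j := by
          rw [h1, Finset.mul_sum]
          exact Finset.sum_congr rfl fun k _ => by ring
      _ = ∑ k, (Aᵀ.adjugate k lst * w (g lst)) * M (f k) j :=
          Finset.sum_congr rfl fun k _ => by rw [h3]
      _ = w (g lst) * ∑ k, A.adjugate lst k * M (f k) j := by
          rw [Finset.mul_sum]
          refine Finset.sum_congr rfl fun k _ => ?_
          rw [← Matrix.adjugate_transpose]
          simp only [Matrix.transpose_apply]
          ring
      _ = w (g lst) * (A.updateCol lst fun k => M (f k) j).det := by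
          congr 1
          rw [show (∑ k, A.adjugate lst k * M (f k) j)
              = (A.adjugate *ᵥ fun k => M (f k) j) lst from rfl,
            ← Matrix.cramer_eq_adjugate_mulVec, Matrix.cramer_apply]
  have hq : ∀ j, (A.updateCol lst fun k => M (f k) j).det ∈ ({-1,0,1} : Set ℝ) := by
    intro j
    have hup : A.updateCol lst (fun k => M (f k) j)
        = M.submatrix f (Function.update g lst j) := by
      ext k l
      by_cases hl : l = lst <;>
        simp [Matrix.updateCol_apply, Function.update_apply, hl, hAdef]
    by_cases hinj : Function.Injective (Function.update g lst j)
    · rw [hup]; exact huni f _ hfinj hinj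
    · have hex : ∃ l, l ≠ lst ∧ g l = j := by
        by_contra hcon
        push_neg at hcon
        apply hinj
        intro a a' hab
        simp only [Function.update_apply] at hab
        by_cases ha : a = lst <;> by_cases hb : a' = lst
        · rw [ha, hb]
        · rw [if_pos ha, if_neg hb] at hab
          exact absurd hab.symm (hcon a' hb)
        · rw [if_neg ha, if_pos hb] at hab
          exact absurd hab (hcon a ha)
        · rw [if_neg ha, if_neg hb] at hab
          exact hginj hab
      obtain ⟨l, hllst, hgl⟩ := hex
      have hz : (A.updateCol lst fun k => M (f k) j).det = 0 := by
        refine Matrix.det_zero_of_column_eq (Ne.symm hllst) fun k => ?_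
        simp [Matrix.updateCol_apply, hllst, hgl, hAdef]
      rw [hz]
      simp
  -- construct the elementary vector
  set e : Fin n → ℝ := (w (g lst))⁻¹ • w with hedef
  have hesupp : {i | e i ≠ 0} = {i | w i ≠ 0} := by
    ext i
    simp [hedef, inv_ne_zero hwglst, hwglst]
  have heW : e ∈ W := Submodule.smul_mem _ _ hwW
  have hene : e ≠ 0 := by
    intro h
    have h1 := congrFun h (g lst)
    simp only [hedef, Pi.smul_apply, smul_eq_mul, Pi.zero_apply] at h1
    rw [inv_mul_cancel₀ hwglst] at h1
    exact one_ne_zero h1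
  have hentries : ∀ j, e j ∈ ({-1,0,1} : Set ℝ) := by
    intro j
    set q := (A.updateCol lst fun k => M (f k) j).det with hqdef
    have hk := hkey j
    have hqj := hq j
    rcases hdet with h | h
    · have hej : e j = q := by
        rw [h, one_mul] at hk
        simp only [hedef, Pi.smul_apply, smul_eq_mul]
        rw [hk, ← mul_assoc, inv_mul_cancel₀ hwglst, one_mul]
      rw [hej]; exact hqj
    · have hej : e j = -q := by
        rw [h] at hk
        have hwj : w j = -(w (g lst) * q) := by linarith
        simp only [hedef, Pi.smul_apply, smul_eq_mul]
        rw [hwj, mul_neg, ← mul_assoc, inv_mul_cancel₀ hwglst, one_mul]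
      rw [hej, hqdef]
      rcases hqj with h1 | h1 | h1 <;> rw [h1] <;> norm_num
  refine ⟨e, ⟨heW, hene, hentries, ?_⟩, ?_⟩
  · intro x hx hx0 hsub
    rw [hesupp] at hsub ⊢
    exact hmin x hx hx0 hsub
  · rw [hesupp]
    exact hwv


lemma mem_closure_elem {M : Matrix (Fin d) (Fin n) ℝ}
    (hrank : M.rank = r)
    (huni : ∀ (f : Fin r → Fin d) (g : Fin r → Fin n),
      Function.Injective f → Function.Injective g →
      (M.submatrix f g).det ∈ ({-1, 0, 1} : Set ℝ))
    {v : Fin n → ℝ} (hv : v ∈ Submodule.span ℝ (Set.range fun i => M i))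
    (hvint : ∀ j, ∃ z : ℤ, v j = (z : ℝ)) :
    v ∈ AddSubgroup.closure
      {c | IsElementaryVec (Submodule.span ℝ (Set.range fun i => M i)) c} := by
  set W := Submodule.span ℝ (Set.range fun i => M i) with hWdef
  obtain ⟨N, hN⟩ : ∃ N, {i | v i ≠ 0}.ncard ≤ N := ⟨_, le_rfl⟩
  induction N generalizing v with
  | zero =>
    have hv0 : v = 0 := by
      by_contra h
      obtain ⟨i, hi⟩ : ∃ i, v i ≠ 0 := by
        by_contra h2; push_neg at h2
        exact h (funext fun i => by simpa using h2 i)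
      have hpos : 0 < ({i | v i ≠ 0}).ncard :=
        (Set.ncard_pos (Set.toFinite _)).mpr ⟨i, hi⟩
      omega
    rw [hv0]
    exact zero_mem _
  | succ N ih =>
    by_cases hv0 : v = 0
    · rw [hv0]; exact zero_mem _
    obtain ⟨e, he, hesupp⟩ := exists_elem hrank huni hv hv0
    obtain ⟨heW, hene, hentries, -⟩ := id he
    obtain ⟨i0, hi0⟩ : ∃ i, e i ≠ 0 := by
      by_contra h2; push_neg at h2
      exact hene (funext fun i => by simpa using h2 i)
    have hi0v : v i0 ≠ 0 := hesupp hi0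
    have he2 : e i0 * e i0 = 1 := by
      rcases hentries i0 with h | h | h
      · rw [h]; norm_num
      · exact absurd h hi0
      · rw [h]; norm_num
    set t : ℝ := v i0 * e i0 with htdef
    set v' : Fin n → ℝ := v - t • e with hv'def
    have hv'W : v' ∈ W := sub_mem hv (Submodule.smul_mem _ _ heW)
    have heint : ∀ j, ∃ z : ℤ, e j = (z : ℝ) := by
      intro j
      rcases hentries j with h | h | h
      · exact ⟨-1, by rw [h]; norm_num⟩
      · exact ⟨0, by rw [h]; norm_num⟩
      · exact ⟨1, by rw [h]; norm_num⟩
    have hv'int : ∀ j, ∃ z : ℤ, v' j = (z : ℝ) := by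
      intro j
      obtain ⟨z1, hz1⟩ := hvint j
      obtain ⟨z2, hz2⟩ := hvint i0
      obtain ⟨z3, hz3⟩ := heint i0
      obtain ⟨z4, hz4⟩ := heint j
      refine ⟨z1 - z2 * z3 * z4, ?_⟩
      simp only [hv'def, htdef, Pi.sub_apply, Pi.smul_apply, smul_eq_mul]
      rw [hz1, hz2, hz3, hz4]
      push_cast
      ring
    have hsub : {i | v' i ≠ 0} ⊆ {i | v i ≠ 0} := by
      intro i hi
      simp only [Set.mem_setOf_eq, hv'def, Pi.sub_apply, Pi.smul_apply, smul_eq_mul] at hi ⊢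
      intro hvi
      apply hi
      have hei : e i = 0 := by
        by_contra hei
        exact (hesupp hei) hvi
      rw [hvi, hei]
      ring
    have hv'i0 : v' i0 = 0 := by
      simp only [hv'def, htdef, Pi.sub_apply, Pi.smul_apply, smul_eq_mul]
      rw [mul_assoc, he2]
      ring
    have hssub : {i | v' i ≠ 0} ⊂ {i | v i ≠ 0} := by
      refine ⟨hsub, fun hcon => ?_⟩
      have : v' i0 ≠ 0 := hcon hi0v
      exact this hv'i0
    have hcard : {i | v' i ≠ 0}.ncard ≤ N := by
      have := Set.ncard_lt_ncard hssub (Set.toFinite _)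
      omega
    have h1 := ih hv'int hv'W hcard
    have hte : t • e ∈ AddSubgroup.closure {c | IsElementaryVec W c} := by
      obtain ⟨z2, hz2⟩ := hvint i0
      obtain ⟨z3, hz3⟩ := heint i0
      have : t = ((z2 * z3 : ℤ) : ℝ) := by rw [htdef, hz2, hz3]; push_cast; ring
      rw [this, Int.cast_smul_eq_zsmul]
      exact AddSubgroup.zsmul_mem _
        (AddSubgroup.subset_closure (show e ∈ {c | IsElementaryVec W c} from he)) _
    have : v = v' + t • e := by rw [hv'def]; abel
    rw [this]
    exact add_mem h1 hte


end Stmt8Aux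

open Stmt8Aux

/-- For a rank `r` unimodular integer matrix `M` with `L = M Mᵀ`, the subgroup
of `ℤ^d` generated by the columns of `L` equals the subgroup generated by the
vectors `M·c` as `c` ranges over the elementary vectors of the row space of `M`
(the cocircuits of the regular oriented matroid represented by `M`; the `M·c`
are twice the barycenters of the facets of the centered zonotope `Z₀(M)`). -/
theorem stmt8 (d n r : ℕ) (M : Matrix (Fin d) (Fin n) ℝ)
    (hint : ∀ i j, ∃ z : ℤ, M i j = (z : ℝ))
    (hrank : M.rank = r)
    (huni : ∀ (f : Fin r → Fin d) (g : Fin r → Fin n),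
      Function.Injective f → Function.Injective g →
      (M.submatrix f g).det ∈ ({-1, 0, 1} : Set ℝ))
    (L : Matrix (Fin d) (Fin d) ℝ) (hLdef : L = M * M.transpose) :
    AddSubgroup.closure (Set.range (fun j => fun i => L i j)) =
      AddSubgroup.closure
        {y : Fin d → ℝ | ∃ c : Fin n → ℝ,
          IsElementaryVec (Submodule.span ℝ (Set.range (fun i => M i))) c ∧
          y = M.mulVec c} := by
  subst hLdef
  have hclos : AddSubgroup.closure (Set.range fun i => M i)
      = AddSubgroup.closure
        {c | IsElementaryVec (Submodule.span ℝ (Set.range fun i => M i)) c} := by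
    apply le_antisymm
    · rw [AddSubgroup.closure_le]
      rintro x ⟨i, rfl⟩
      exact mem_closure_elem hrank huni (Submodule.subset_span ⟨i, rfl⟩) (hint i)
    · rw [AddSubgroup.closure_le]
      intro c hc
      have hcint : ∀ j, ∃ z : ℤ, c j = (z : ℝ) := by
        intro j
        rcases hc.2.2.1 j with h | h | h
        · exact ⟨-1, by rw [h]; norm_num⟩
        · exact ⟨0, by rw [h]; norm_num⟩
        · exact ⟨1, by rw [h]; norm_num⟩
      exact SetLike.le_def.mp le_rfl (mem_closure_rows hint hrank huni hc.1 hcint)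
  have hsetsL : (Set.range fun j => fun i => (M * Mᵀ) i j)
      = M.mulVec '' (Set.range fun i => M i) := by
    rw [← Set.range_comp]
    congr 1
  have hsetsR : {y : Fin d → ℝ | ∃ c : Fin n → ℝ,
        IsElementaryVec (Submodule.span ℝ (Set.range (fun i => M i))) c ∧ y = M.mulVec c}
      = M.mulVec ''
        {c | IsElementaryVec (Submodule.span ℝ (Set.range fun i => M i)) c} := by
    ext y
    simp only [Set.mem_setOf_eq, Set.mem_image]
    constructor
    · rintro ⟨c, hc, rfl⟩; exact ⟨c, hc, rfl⟩
    · rintro ⟨c, hc, rfl⟩; exact ⟨c, hc, rfl⟩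
  have hmapim : ∀ s : Set (Fin n → ℝ), M.mulVec '' s = (M.mulVecLin.toAddMonoidHom) '' s := by
    intro s
    congr 1
  rw [hsetsL, hsetsR, hmapim, hmapim, ← AddMonoidHom.map_closure, ← AddMonoidHom.map_closure,
    hclos]
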